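/- For all integers p, q, k with p ≥ 3, 1 ≤ q ≤ p−2 and k ≥ q, we have g^k_q(p) ≤ 2^{2k(p−2)/q + 1}, where the exponent 2k(p−2)/q + 1 is a real number. -/

import Mathlib

open Finset

/-- A Gallai coloring: a symmetric edge-coloring of the complete graph on `V`
with no rainbow triangle. -/
def IsGallai {V β : Type*} (c : V → V → β) : Prop :=
  (∀ a b, c a b = c b a) ∧
  ∀ a b d : V, a ≠ b → a ≠ d → b ≠ d →
    ¬(c a b ≠ c a d ∧ c a b ≠ c b d ∧ c a d ≠ c b d)

/-- The set of colors appearing on edges inside the vertex set `S`. -/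
def colorsOn {V β : Type*} [DecidableEq V] [DecidableEq β]
    (c : V → V → β) (S : Finset V) : Finset β :=
  ((S ×ˢ S).filter fun p => p.1 ≠ p.2).image fun p => c p.1 p.2

/-- `gallaiNum k q p` is the smallest positive `n` such that every Gallai-`k`-coloring
of `K_n` contains a set of `p` vertices whose induced edges use at most `q` colors. -/
noncomputable def gallaiNum (k q p : ℕ) : ℕ :=
  sInf {n : ℕ | 0 < n ∧ ∀ c : Fin n → Fin n → Fin k, IsGallai c →
    ∃ S : Finset (Fin n), S.card = p ∧ (colorsOn c S).card ≤ q}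


lemma step_lemma {N k : ℕ} (c : Fin N → Fin N → Fin k)
    (hsym : ∀ a b, c a b = c b a)
    (hG : ∀ a b d : Fin N, a ≠ b → a ≠ d → b ≠ d →
      ¬(c a b ≠ c a d ∧ c a b ≠ c b d ∧ c a d ≠ c b d))
    (S : Finset (Fin N)) (h2 : 2 ≤ S.card) :
    ∃ v ∈ S, ∃ d : Fin k, S.card ≤ 3 * (S.filter fun x => x ≠ v ∧ c v x = d).card := by
  by_contra hcon
  push_neg at hcon
  have hne : S.Nonempty := Finset.card_pos.mp (by omega)
  obtain ⟨u, hu⟩ := hne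
  set n := S.card with hn
  set S' := S.erase u with hS'
  have hS'card : S'.card = n - 1 := Finset.card_erase_of_mem hu
  set P : Finset (Fin N × Fin N) :=
    (S' ×ˢ S').filter (fun p => c u p.2 ≠ c u p.1 ∧ c p.1 p.2 = c u p.2) with hP
  -- lower bound on the fibers over the first coordinate
  have hlow : ∀ w ∈ S', n + 2 ≤ 3 * (P.filter fun p => p.1 = w).card := by
    intro w hw
    have hwS : w ∈ S := Finset.mem_of_mem_erase hw
    have hwu : w ≠ u := Finset.ne_of_mem_erase hw
    set E2 := S'.erase w with hE2
    have hE2card : E2.card = n - 2 := by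
      rw [hE2, Finset.card_erase_of_mem hw, hS'card]
      omega
    set Rw := E2.filter (fun x => ¬ (c u x = c u w)) with hRw
    set Kw := E2.filter (fun x => c u x = c u w) with hKw
    have hsplit : Kw.card + Rw.card = n - 2 := by
      rw [hKw, hRw, Finset.card_filter_add_card_filter_not, hE2card]
    -- Kw bound
    have hKbound : Kw.card + 1 ≤ (S.filter fun x => x ≠ u ∧ c u x = c u w).card := by
      have hwk : w ∉ Kw := by
        intro hcontra
        exact (Finset.notMem_erase w S') (Finset.mem_of_mem_filter w hcontra)
      have hsub : insert w Kw ⊆ S.filter fun x => x ≠ u ∧ c u x = c u w := by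
        intro x hx
        rcases Finset.mem_insert.mp hx with h | h
        · rw [h]; exact Finset.mem_filter.mpr ⟨hwS, hwu, rfl⟩
        · obtain ⟨hxE2, hxc⟩ := Finset.mem_filter.mp h
          have hxS' : x ∈ S' := Finset.mem_of_mem_erase hxE2
          exact Finset.mem_filter.mpr ⟨Finset.mem_of_mem_erase hxS',
            Finset.ne_of_mem_erase hxS', hxc⟩
      calc Kw.card + 1 = (insert w Kw).card := (Finset.card_insert_of_notMem hwk).symm
        _ ≤ _ := Finset.card_le_card hsub
    -- cover of Rw
    set Fw := Rw.filter (fun x => c w x = c u x) with hFw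
    set Gw := Rw.filter (fun x => c w x = c u w) with hGw
    have hcover : Rw ⊆ Fw ∪ Gw := by
      intro x hx
      obtain ⟨hxE2, hxc⟩ := Finset.mem_filter.mp hx
      have hxw : x ≠ w := Finset.ne_of_mem_erase hxE2
      have hxS' : x ∈ S' := Finset.mem_of_mem_erase hxE2
      have hxu : x ≠ u := Finset.ne_of_mem_erase hxS'
      have := hG u w x (Ne.symm hwu) (Ne.symm hxu) (Ne.symm hxw)
      have hne' : c u w ≠ c u x := fun h => hxc h.symm
      rw [Finset.mem_union]
      by_cases hc1 : c w x = c u w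
      · exact Or.inr (Finset.mem_filter.mpr ⟨hx, hc1⟩)
      · refine Or.inl (Finset.mem_filter.mpr ⟨hx, ?_⟩)
        by_contra hc2
        exact this ⟨hne', fun h => hc1 h.symm, fun h => hc2 h.symm⟩
    have hRcard : Rw.card ≤ Fw.card + Gw.card :=
      le_trans (Finset.card_le_card hcover) (Finset.card_union_le _ _)
    -- Gw bound
    have hGbound : Gw.card + 1 ≤ (S.filter fun x => x ≠ w ∧ c w x = c u w).card := by
      have huG : u ∉ Gw := by
        intro hcontra
        have : u ∈ S' := Finset.mem_of_mem_erase (Finset.mem_of_mem_filter u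
          (Finset.mem_of_mem_filter u hcontra))
        exact (Finset.notMem_erase u S) this
      have hsub : insert u Gw ⊆ S.filter fun x => x ≠ w ∧ c w x = c u w := by
        intro x hx
        rcases Finset.mem_insert.mp hx with h | h
        · rw [h]
          exact Finset.mem_filter.mpr ⟨hu, Ne.symm hwu, hsym w u⟩
        · obtain ⟨hxR, hxc⟩ := Finset.mem_filter.mp h
          obtain ⟨hxE2, _⟩ := Finset.mem_filter.mp hxR
          have hxw : x ≠ w := Finset.ne_of_mem_erase hxE2
          have hxS' : x ∈ S' := Finset.mem_of_mem_erase hxE2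
          exact Finset.mem_filter.mpr ⟨Finset.mem_of_mem_erase hxS', hxw, hxc⟩
      calc Gw.card + 1 = (insert u Gw).card := (Finset.card_insert_of_notMem huG).symm
        _ ≤ _ := Finset.card_le_card hsub
    -- Fw injects into the fiber
    have hFbound : Fw.card ≤ (P.filter fun p => p.1 = w).card := by
      apply Finset.card_le_card_of_injOn (fun x => (w, x))
      · intro x hx
        obtain ⟨hxR, hxc⟩ := Finset.mem_filter.mp hx
        obtain ⟨hxE2, hxc'⟩ := Finset.mem_filter.mp hxR
        have hxS' : x ∈ S' := Finset.mem_of_mem_erase hxE2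
        refine Finset.mem_filter.mpr ⟨Finset.mem_filter.mpr ⟨Finset.mem_product.mpr ⟨hw, hxS'⟩, ?_, hxc⟩, rfl⟩
        exact fun h => hxc' h
      · intro x _ y _ hxy
        exact congrArg Prod.snd hxy
    have hA := hcon u hu (c u w)
    have hB := hcon w hwS (c u w)
    omega
  -- double counting
  have hP1 : P.card = ∑ w ∈ S', (P.filter fun p => p.1 = w).card := by
    apply Finset.card_eq_sum_card_fiberwise
    intro p hp
    exact (Finset.mem_product.mp (Finset.mem_filter.mp hp).1).1
  have hP2 : P.card = ∑ x ∈ S', (P.filter fun p => p.2 = x).card := by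
    apply Finset.card_eq_sum_card_fiberwise
    intro p hp
    exact (Finset.mem_product.mp (Finset.mem_filter.mp hp).1).2
  have hfib2 : ∀ x ∈ S', (P.filter fun p => p.2 = x).card ≤
      (S.filter fun y => y ≠ x ∧ c x y = c u x).card := by
    intro x hx
    apply Finset.card_le_card_of_injOn (fun p => p.1)
    · intro p hp
      obtain ⟨hpP, hp2⟩ := Finset.mem_filter.mp hp
      obtain ⟨hpprod, hpc1, hpc2⟩ := Finset.mem_filter.mp hpP
      have hp1S : p.1 ∈ S := Finset.mem_of_mem_erase (Finset.mem_product.mp hpprod).1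
      subst hp2
      refine Finset.mem_filter.mpr ⟨hp1S, ?_, ?_⟩
      · intro h; simp only at h; exact hpc1 (by rw [h])
      · rw [hsym]; exact hpc2
    · intro a ha b hb hab
      have ha2 := (Finset.mem_filter.mp ha).2
      have hb2 := (Finset.mem_filter.mp hb).2
      exact Prod.ext hab (ha2.trans hb2.symm)
  have hup : 3 * P.card ≤ (n - 1) * (n - 1) := by
    rw [hP2, Finset.mul_sum]
    calc ∑ x ∈ S', 3 * (P.filter fun p => p.2 = x).card
        ≤ ∑ x ∈ S', (n - 1) := by
          apply Finset.sum_le_sum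
          intro x hx
          have h1 := hfib2 x hx
          have h2 := hcon x (Finset.mem_of_mem_erase hx) (c u x)
          omega
      _ = (n - 1) * (n - 1) := by rw [Finset.sum_const, hS'card, smul_eq_mul]
  have hdown : (n - 1) * (n + 2) ≤ 3 * P.card := by
    rw [hP1, Finset.mul_sum]
    calc (n - 1) * (n + 2) = ∑ _w ∈ S', (n + 2) := by rw [Finset.sum_const, hS'card, smul_eq_mul]
      _ ≤ _ := Finset.sum_le_sum hlow
  have hfinal := le_trans hdown hup
  have := Nat.le_of_mul_le_mul_left hfinal (show 0 < n - 1 by omega)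
  omega


def PChain {N k : ℕ} (c : Fin N → Fin N → Fin k) :
    List (Fin N × Fin k) → Finset (Fin N) → Prop
  | [], _ => True
  | vd :: L, T => (∀ x ∈ L.map Prod.fst, c vd.1 x = vd.2 ∧ vd.1 ≠ x) ∧
      (∀ x ∈ T, c vd.1 x = vd.2 ∧ vd.1 ≠ x) ∧ PChain c L T

lemma pchain_sublist {N k : ℕ} {c : Fin N → Fin N → Fin k} {T : Finset (Fin N)}
    {L₁ L₂ : List (Fin N × Fin k)} (h : L₁.Sublist L₂) (hch : PChain c L₂ T) :
    PChain c L₁ T := by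
  induction h with
  | slnil => exact hch
  | cons a h ih => exact ih hch.2.2
  | cons_cons a h ih =>
    refine ⟨?_, hch.2.1, ih hch.2.2⟩
    intro x hx
    exact hch.1 x ((h.map Prod.fst).subset hx)

lemma pchain_nodup {N k : ℕ} {c : Fin N → Fin N → Fin k} {T : Finset (Fin N)} :
    ∀ {L : List (Fin N × Fin k)}, PChain c L T → (L.map Prod.fst).Nodup := by
  intro L
  induction L with
  | nil => intro _; simp
  | cons vd L ih =>
    intro hch
    simp only [List.map_cons, List.nodup_cons]
    exact ⟨fun hmem => (hch.1 vd.1 hmem).2 rfl, ih hch.2.2⟩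

lemma pchain_t {N k : ℕ} {c : Fin N → Fin N → Fin k} {T : Finset (Fin N)} :
    ∀ {L : List (Fin N × Fin k)}, PChain c L T → ∀ vd ∈ L, ∀ t ∈ T,
      c vd.1 t = vd.2 ∧ vd.1 ≠ t := by
  intro L
  induction L with
  | nil => intro _ vd hvd; exact absurd hvd List.not_mem_nil
  | cons a L ih =>
    intro hch vd hvd t ht
    rcases List.mem_cons.mp hvd with h | h
    · rw [h]; exact hch.2.1 t ht
    · exact ih hch.2.2 vd h t ht

lemma pchain_color {N k : ℕ} {c : Fin N → Fin N → Fin k}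
    (hsym : ∀ a b, c a b = c b a) (Q : Finset (Fin k)) :
    ∀ (L : List (Fin N × Fin k)) (T : Finset (Fin N)) (t₀ : Fin N),
      PChain c L T → t₀ ∈ T → (∀ vd ∈ L, vd.2 ∈ Q) →
      ∀ a b, a ∈ insert t₀ (L.map Prod.fst).toFinset →
        b ∈ insert t₀ (L.map Prod.fst).toFinset → a ≠ b → c a b ∈ Q := by
  intro L
  induction L with
  | nil =>
    intro T t₀ _ _ _ a b ha hb hab
    simp only [List.map_nil, List.toFinset_nil, LawfulSingleton.insert_empty_eq, Finset.mem_singleton] at ha hb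
    exact absurd (ha.trans hb.symm) hab
  | cons vd L ih =>
    intro T t₀ hch ht hQ a b ha hb hab
    have hQ' : ∀ x ∈ L, x.2 ∈ Q := fun x hx => hQ x (List.mem_cons_of_mem vd hx)
    have hvdQ : vd.2 ∈ Q := hQ vd List.mem_cons_self
    simp only [List.map_cons, List.toFinset_cons, Finset.mem_insert] at ha hb
    have hmem : ∀ y, y = t₀ ∨ y ∈ (L.map Prod.fst).toFinset →
        y ∈ insert t₀ (L.map Prod.fst).toFinset := by
      intro y hy
      rcases hy with h | h
      · rw [h]; exact Finset.mem_insert_self _ _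
      · exact Finset.mem_insert_of_mem h
    rcases ha with ha | ha | ha
    · -- a = t₀
      rcases hb with hb | hb | hb
      · exact absurd (ha.trans hb.symm) hab
      · -- b = vd.1 : c a b = c t₀ vd.1 = c vd.1 t₀ = vd.2
        rw [ha, hb, hsym]
        rw [(hch.2.1 t₀ ht).1]; exact hvdQ
      · exact ih T t₀ hch.2.2 ht hQ' a b (hmem a (Or.inl ha)) (hmem b (Or.inr hb)) hab
    · -- a = vd.1
      rcases hb with hb | hb | hb
      · rw [ha, hb, (hch.2.1 t₀ ht).1]; exact hvdQ
      · exact absurd (ha.trans hb.symm) hab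
      · rw [ha]
        have hbmem : b ∈ L.map Prod.fst := List.mem_toFinset.mp hb
        rw [(hch.1 b hbmem).1]; exact hvdQ
    · rcases hb with hb | hb | hb
      · exact ih T t₀ hch.2.2 ht hQ' a b (hmem a (Or.inr ha)) (hmem b (Or.inl hb)) hab
      · rw [hb, hsym]
        have hamem : a ∈ L.map Prod.fst := List.mem_toFinset.mp ha
        rw [(hch.1 a hamem).1]; exact hvdQ
      · exact ih T t₀ hch.2.2 ht hQ' a b (hmem a (Or.inr ha)) (hmem b (Or.inr hb)) hab


lemma countP_sum {α : Type*} {k : ℕ} (L : List (α × Fin k)) (Q : Finset (Fin k)) :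
    (L.countP (fun vd => vd.2 ∈ Q)) = ∑ d ∈ Q, L.countP (fun vd => vd.2 = d) := by
  induction L with
  | nil => simp
  | cons a L ih =>
    simp only [List.countP_cons, ih, decide_eq_true_eq]
    rw [Finset.sum_add_distrib, Finset.sum_ite_eq Q a.2 (fun _ => 1)]


lemma countP_total {α : Type*} {k : ℕ} (L : List (α × Fin k)) :
    L.length = ∑ d ∈ (univ : Finset (Fin k)), L.countP (fun vd => vd.2 = d) := by
  rw [← countP_sum L univ]
  have : (fun (vd : α × Fin k) => decide (vd.2 ∈ (univ : Finset (Fin k)))) = fun _ => true := by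
    funext vd; simp
  rw [this, List.countP_true]

lemma pigeonhole {α : Type*} {k : ℕ} (q r : ℕ) (hq : 1 ≤ q) (hqk : q ≤ k)
    (L : List (α × Fin k)) (hlen : k * r / q < L.length) :
    ∃ Q : Finset (Fin k), Q.card ≤ q ∧ r + 1 ≤ L.countP (fun vd => vd.2 ∈ Q) := by
  by_contra hcon
  push_neg at hcon
  have hne : ((univ : Finset (Fin k)).powersetCard q).Nonempty := by
    rw [Finset.powersetCard_nonempty]
    simpa using hqk
  obtain ⟨Q, hQmem, hQmax⟩ :=
    Finset.exists_max_image _ (fun Q => L.countP (fun vd => vd.2 ∈ Q)) hne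
  have hQcard : Q.card = q := (Finset.mem_powersetCard.mp hQmem).2
  have hQsum : ∑ d ∈ Q, L.countP (fun vd => vd.2 = d) ≤ r := by
    rw [← countP_sum]
    have := hcon Q (le_of_eq hQcard)
    omega
  have hQne : Q.Nonempty := Finset.card_pos.mp (by omega)
  obtain ⟨cmin, hcminQ, hcmin⟩ :=
    Finset.exists_min_image Q (fun d => L.countP (fun vd => vd.2 = d)) hQne
  set a := L.countP (fun vd => vd.2 = cmin) with ha
  have hqa : q * a ≤ r := by
    have h1 : Q.card • a ≤ ∑ d ∈ Q, L.countP (fun vd => vd.2 = d) :=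
      Finset.card_nsmul_le_sum Q _ a hcmin
    rw [hQcard, smul_eq_mul] at h1
    omega
  have hout : ∀ d, d ∉ Q → L.countP (fun vd => vd.2 = d) ≤ a := by
    intro d hd
    have hdc : d ∉ Q.erase cmin := fun h => hd (Finset.mem_of_mem_erase h)
    have hQ'card : (insert d (Q.erase cmin)).card = q := by
      rw [Finset.card_insert_of_notMem hdc, Finset.card_erase_of_mem hcminQ]
      omega
    have hQ'mem : insert d (Q.erase cmin) ∈ (univ : Finset (Fin k)).powersetCard q :=
      Finset.mem_powersetCard.mpr ⟨Finset.subset_univ _, hQ'card⟩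
    have hmax := hQmax _ hQ'mem
    rw [countP_sum, countP_sum, Finset.sum_insert hdc] at hmax
    have herase : (∑ x ∈ Q.erase cmin, L.countP (fun vd => vd.2 = x)) + a =
        ∑ x ∈ Q, L.countP (fun vd => vd.2 = x) := Finset.sum_erase_add Q _ hcminQ
    omega
  have htot : L.length ≤ r + (k - q) * a := by
    have hcompl : ∑ d ∈ Qᶜ, L.countP (fun vd => vd.2 = d) ≤ (k - q) * a := by
      have := Finset.sum_le_card_nsmul Qᶜ (fun d => L.countP (fun vd => vd.2 = d)) a
        (fun x hx => hout x (Finset.mem_compl.mp hx))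
      rwa [Finset.card_compl, Fintype.card_fin, hQcard, smul_eq_mul] at this
    have hsplit : ∑ d ∈ Q, L.countP (fun vd => vd.2 = d) +
        ∑ d ∈ Qᶜ, L.countP (fun vd => vd.2 = d) =
        ∑ d ∈ (univ : Finset (Fin k)), L.countP (fun vd => vd.2 = d) :=
      Finset.sum_add_sum_compl Q _
    have htotal := countP_total L (k := k) (α := α)
    omega
  -- final contradiction
  have h1 : q * L.length ≤ q * (r + (k - q) * a) := Nat.mul_le_mul_left q htot
  have h2 : q * (r + (k - q) * a) = q * r + (k - q) * (q * a) := by ring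
  have h3 : (k - q) * (q * a) ≤ (k - q) * r := Nat.mul_le_mul_left _ hqa
  have h4 : q * r + (k - q) * r = k * r := by
    rw [← add_mul, Nat.add_sub_cancel' hqk]
  have h5 : k * r < q * L.length := by
    have h7 : q * (k * r / q + 1) ≤ q * L.length := Nat.mul_le_mul_left q hlen
    have h8 : q * (k * r / q) + q = q * (k * r / q + 1) := by ring
    have h6 := Nat.div_add_mod (k * r) q
    have h9 : (k * r) % q < q := Nat.mod_lt _ (by omega)
    calc k * r < q * (k * r / q) + q := by omega
      _ = q * (k * r / q + 1) := h8
      _ ≤ q * L.length := h7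
  have : q * L.length ≤ k * r := by
    calc q * L.length ≤ q * r + (k - q) * (q * a) := by rw [← h2]; exact h1
      _ ≤ q * r + (k - q) * r := by omega
      _ = k * r := h4
  omega

lemma build_chain {N k : ℕ} (c : Fin N → Fin N → Fin k)
    (hsym : ∀ a b, c a b = c b a)
    (hG : ∀ a b d : Fin N, a ≠ b → a ≠ d → b ≠ d →
      ¬(c a b ≠ c a d ∧ c a b ≠ c b d ∧ c a d ≠ c b d)) :
    ∀ (m : ℕ) (S : Finset (Fin N)), 3 ^ m ≤ S.card →
    ∃ (L : List (Fin N × Fin k)) (T : Finset (Fin N)), L.length = m ∧ T ⊆ S ∧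
      T.Nonempty ∧ (∀ x ∈ L.map Prod.fst, x ∈ S) ∧ PChain c L T := by
  intro m
  induction m with
  | zero =>
    intro S hS
    exact ⟨[], S, rfl, Finset.Subset.refl S, Finset.card_pos.mp (by simpa using hS),
      by simp, trivial⟩
  | succ m ih =>
    intro S hS
    have h3 : (3 : ℕ) ≤ 3 ^ (m + 1) := Nat.le_self_pow (by omega) 3
    have h2 : 2 ≤ S.card := by omega
    obtain ⟨v, hv, d, hvd⟩ := step_lemma c hsym hG S h2
    set T0 := S.filter (fun x => x ≠ v ∧ c v x = d) with hT0def
    have hT0 : 3 ^ m ≤ T0.card := by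
      have hpow : 3 ^ (m + 1) = 3 * 3 ^ m := by ring
      omega
    obtain ⟨L, T, hlen, hTsub, hTne, hpiv, hch⟩ := ih T0 hT0
    have hT0prop : ∀ x ∈ T0, c v x = d ∧ v ≠ x := by
      intro x hx
      obtain ⟨_, hxv, hxc⟩ := Finset.mem_filter.mp hx
      exact ⟨hxc, Ne.symm hxv⟩
    have hT0S : T0 ⊆ S := Finset.filter_subset _ _
    refine ⟨(v, d) :: L, T, by simp [hlen], hTsub.trans hT0S, hTne, ?_, ?_, ?_, hch⟩
    · intro x hx
      simp only [List.map_cons, List.mem_cons] at hx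
      rcases hx with h | h
      · rw [h]; exact hv
      · exact hT0S (hpiv x h)
    · intro x hx
      exact hT0prop x (hpiv x hx)
    · intro x hx
      exact hT0prop x (hTsub hx)

lemma key_mem {k q p : ℕ} (hp : 3 ≤ p) (hq1 : 1 ≤ q) (hqk : q < k) (a : ℕ)
    (ha : a = k * (p - 2) / q) :
    ∀ c : Fin (3 ^ (a + 1)) → Fin (3 ^ (a + 1)) → Fin k, IsGallai c →
      ∃ S : Finset (Fin (3 ^ (a + 1))), S.card = p ∧ (colorsOn c S).card ≤ q := by
  intro c hc
  obtain ⟨hsym, hG⟩ := hc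
  obtain ⟨L, T, hlen, hTsub, hTne, hpiv, hch⟩ :=
    build_chain c hsym hG (a + 1) univ (by simp)
  obtain ⟨t₀, ht₀⟩ := hTne
  obtain ⟨Q, hQcard, hQlen⟩ := pigeonhole q (p - 2) hq1 (le_of_lt hqk) L
    (by rw [hlen, ha]; omega)
  set LF := L.filter (fun vd => vd.2 ∈ Q) with hLF
  have hLFlen : p - 2 + 1 ≤ LF.length := by
    rw [hLF, ← List.countP_eq_length_filter]
    exact hQlen
  set L₂ := LF.take (p - 2 + 1) with hL₂
  have hL₂len : L₂.length = p - 2 + 1 := by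
    rw [hL₂, List.length_take]
    omega
  have hsubLF : L₂.Sublist LF := List.take_sublist _ _
  have hsub : L₂.Sublist L := hsubLF.trans List.filter_sublist
  have hch₂ : PChain c L₂ T := pchain_sublist hsub hch
  have hQ₂ : ∀ vd ∈ L₂, vd.2 ∈ Q := by
    intro vd hvd
    have hmem : vd ∈ LF := hsubLF.subset hvd
    rw [hLF] at hmem
    simpa using (List.mem_filter.mp hmem).2
  set Sfin := insert t₀ (L₂.map Prod.fst).toFinset with hSfin
  have hnodup : (L₂.map Prod.fst).Nodup := pchain_nodup hch₂
  have ht₀not : t₀ ∉ (L₂.map Prod.fst).toFinset := by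
    intro hmem
    rw [List.mem_toFinset, List.mem_map] at hmem
    obtain ⟨vd, hvdL, hvd1⟩ := hmem
    exact (pchain_t hch₂ vd hvdL t₀ ht₀).2 hvd1
  have hcard : Sfin.card = p := by
    rw [hSfin, Finset.card_insert_of_notMem ht₀not, List.card_toFinset,
      hnodup.dedup, List.length_map, hL₂len]
    omega
  refine ⟨Sfin, hcard, ?_⟩
  have hsubQ : colorsOn c Sfin ⊆ Q := by
    intro col hcol
    rw [colorsOn, Finset.mem_image] at hcol
    obtain ⟨pr, hpr, hprc⟩ := hcol
    obtain ⟨hprod, hne'⟩ := Finset.mem_filter.mp hpr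
    obtain ⟨h1, h2⟩ := Finset.mem_product.mp hprod
    rw [← hprc]
    exact pchain_color hsym Q L₂ T t₀ hch₂ ht₀ hQ₂ pr.1 pr.2 h1 h2 hne'
  calc (colorsOn c Sfin).card ≤ Q.card := Finset.card_le_card hsubQ
    _ ≤ q := hQcard

lemma pow_ineq : ∀ a : ℕ, 2 ≤ a → 3 ^ (a + 1) ≤ 2 ^ (2 * a + 1) := by
  intro a ha
  induction a, ha using Nat.le_induction with
  | base => norm_num
  | succ a ha ih =>
    have h1 := ih
    calc 3 ^ (a + 1 + 1) = 3 * 3 ^ (a + 1) := by ring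
      _ ≤ 3 * 2 ^ (2 * a + 1) := by omega
      _ ≤ 4 * 2 ^ (2 * a + 1) := by omega
      _ = 2 ^ (2 * (a + 1) + 1) := by ring


theorem gallaiNum_le_two_rpow (p q k : ℕ) (hp : 3 ≤ p) (hq1 : 1 ≤ q) (hq2 : q ≤ p - 2)
    (hk : q ≤ k) :
    (gallaiNum k q p : ℝ) ≤ 2 ^ (2 * (k : ℝ) * ((p : ℝ) - 2) / (q : ℝ) + 1) := by
  have hq0 : (0 : ℝ) < (q : ℝ) := by positivity
  rcases eq_or_lt_of_le hk with hqk | hqk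
  · -- q = k : trivial case
    have hmem : p ∈ {n : ℕ | 0 < n ∧ ∀ c : Fin n → Fin n → Fin k, IsGallai c →
        ∃ S : Finset (Fin n), S.card = p ∧ (colorsOn c S).card ≤ q} := by
      refine ⟨by omega, fun c _ => ⟨univ, by simp, ?_⟩⟩
      calc (colorsOn c univ).card ≤ (univ : Finset (Fin k)).card := Finset.card_le_univ _
        _ = k := by simp
        _ = q := hqk.symm
    have h1 : gallaiNum k q p ≤ p := Nat.sInf_le hmem
    have hexp : 2 * (k : ℝ) * ((p : ℝ) - 2) / (q : ℝ) + 1 = ((2 * p - 3 : ℕ) : ℝ) := by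
      have hk0 : (k : ℝ) ≠ 0 := Nat.cast_ne_zero.mpr (by omega)
      rw [← hqk] at hk0 ⊢
      push_cast [Nat.cast_sub (show 3 ≤ 2 * p by omega)]
      field_simp
      ring
    rw [hexp, Real.rpow_natCast]
    have h2 : p ≤ 2 ^ (2 * p - 3) := by
      have h3 : p < 2 ^ p := Nat.lt_two_pow_self
      have h4 : 2 ^ p ≤ 2 ^ (2 * p - 3) := Nat.pow_le_pow_right (by norm_num) (by omega)
      omega
    calc (gallaiNum k q p : ℝ) ≤ (p : ℝ) := by exact_mod_cast h1
      _ ≤ ((2 ^ (2 * p - 3) : ℕ) : ℝ) := by exact_mod_cast h2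
      _ = (2 : ℝ) ^ (2 * p - 3) := by push_cast; ring
  · -- q < k
    set a := k * (p - 2) / q with ha
    have ha2 : 2 ≤ a := by
      rw [ha, Nat.le_div_iff_mul_le (by omega : 0 < q)]
      by_cases hp4 : 4 ≤ p
      · calc 2 * q ≤ (p - 2) * k := Nat.mul_le_mul (by omega) (le_of_lt hqk)
          _ = k * (p - 2) := by ring
      · have hp3 : p = 3 := by omega
        have hq1' : q = 1 := by omega
        subst hp3; subst hq1'
        omega
    have hmem : 3 ^ (a + 1) ∈ {n : ℕ | 0 < n ∧ ∀ c : Fin n → Fin n → Fin k, IsGallai c →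
        ∃ S : Finset (Fin n), S.card = p ∧ (colorsOn c S).card ≤ q} :=
      ⟨by positivity, key_mem hp hq1 hqk a ha⟩
    have h1 : gallaiNum k q p ≤ 3 ^ (a + 1) := Nat.sInf_le hmem
    have h2 : (3:ℕ) ^ (a + 1) ≤ 2 ^ (2 * a + 1) := pow_ineq a ha2
    have hcast : ((a : ℝ)) ≤ (k : ℝ) * ((p : ℝ) - 2) / (q : ℝ) := by
      have h3 : ((a : ℝ)) ≤ ((k * (p - 2) : ℕ) : ℝ) / ((q : ℕ) : ℝ) := by
        rw [ha]; exact Nat.cast_div_le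
      have h4 : ((k * (p - 2) : ℕ) : ℝ) = (k : ℝ) * ((p : ℝ) - 2) := by
        push_cast [Nat.cast_sub (show 2 ≤ p by omega)]
        ring
      rwa [h4] at h3
    have hexp : ((2 * a + 1 : ℕ) : ℝ) ≤ 2 * (k : ℝ) * ((p : ℝ) - 2) / (q : ℝ) + 1 := by
      have : 2 * (k : ℝ) * ((p : ℝ) - 2) / (q : ℝ) = 2 * ((k : ℝ) * ((p : ℝ) - 2) / (q : ℝ)) := by
        ring
      rw [this]
      push_cast
      linarith
    calc (gallaiNum k q p : ℝ) ≤ ((3 ^ (a + 1) : ℕ) : ℝ) := by exact_mod_cast h1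
      _ ≤ ((2 ^ (2 * a + 1) : ℕ) : ℝ) := by exact_mod_cast h2
      _ = (2 : ℝ) ^ ((2 * a + 1 : ℕ) : ℝ) := by rw [Real.rpow_natCast]; push_cast; ring
      _ ≤ _ := Real.rpow_le_rpow_of_exponent_le one_le_two hexp
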